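/- arXiv:1312.3164 — 2 statements merged into one kernel-verified Lean document; each statement's English description precedes it below -/
import Mathlib

section
/- For all integers u ≥ 0, k ≥ 2, n ≥ 3, and m ≥ max{u+1, (k-1)(n-1)}, the determinant satisfies D(m,n,u,k) = D(m+1,n,u,k) - D(m+1,n-1,u,k). -/
/-- Binomial coefficient `C(a,b)` for integers, with the convention that it is `0` when `b < 0`. -/
def ichoose (a b : ℤ) : ℤ := if 0 ≤ b then (a.toNat.choose b.toNat : ℤ) else 0

/-- The determinant `D(m,n,u,k)` of the `(n-1)×(n-1)` matrix with `(i,j)` entry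
`C(m - max{u, (k-1)j}, 1 - i + j)` for `i, j = 1, …, n-1`. -/
def D (m n u k : ℤ) : ℤ :=
  Matrix.det (Matrix.of fun i j : Fin (n - 1).toNat =>
    ichoose (m - max u ((k - 1) * ((j : ℤ) + 1))) (1 - ((i : ℤ) + 1) + ((j : ℤ) + 1)))

/-- Size-indexed version of `D`. -/
def D' (m u k : ℤ) (N : ℕ) : ℤ :=
  Matrix.det (Matrix.of fun i j : Fin N =>
    ichoose (m - max u ((k - 1) * ((j : ℤ) + 1))) (1 - ((i : ℤ) + 1) + ((j : ℤ) + 1)))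

lemma D_eq_D' (m n u k : ℤ) : D m n u k = D' m u k (n - 1).toNat := rfl

lemma ichoose_zero (a : ℤ) : ichoose a 0 = 1 := by simp [ichoose]

lemma ichoose_neg (a b : ℤ) (hb : b < 0) : ichoose a b = 0 := by
  simp [ichoose, not_le.mpr hb]

lemma ichoose_pascal (a b : ℤ) (ha : 0 ≤ a) :
    ichoose (a + 1) b = ichoose a b + ichoose a (b - 1) := by
  rcases le_or_gt 1 b with hb | hb
  · unfold ichoose
    rw [if_pos (by omega : (0:ℤ) ≤ b), if_pos (by omega : (0:ℤ) ≤ b),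
      if_pos (by omega : (0:ℤ) ≤ b - 1)]
    rw [show (a + 1).toNat = a.toNat + 1 by omega, show b.toNat = (b - 1).toNat + 1 by omega,
      Nat.choose_succ_succ]
    push_cast
    ring
  · rcases lt_or_eq_of_le (show b ≤ 0 by omega) with hb0 | hb0
    · rw [ichoose_neg _ _ hb0, ichoose_neg _ _ hb0, ichoose_neg _ _ (by omega)]
      ring
    · subst hb0
      rw [ichoose_zero, ichoose_zero, ichoose_neg _ _ (by omega)]
      ring

lemma det_step (p : ℕ) (m u k : ℤ)
    (hg : ∀ j : Fin (p + 2), max u ((k - 1) * ((j : ℤ) + 1)) ≤ m) :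
    D' (m + 1) u k (p + 2) = D' m u k (p + 2) + D' (m + 1) u k (p + 1) := by
  set g : Fin (p + 2) → ℤ := fun j => max u ((k - 1) * ((j : ℤ) + 1)) with hgdef
  set Af : Matrix (Fin (p + 2)) (Fin (p + 2)) ℤ :=
    Matrix.of fun i j => ichoose (m - g j) (1 - ((i : ℤ) + 1) + ((j : ℤ) + 1)) with hAf
  set Bf : Matrix (Fin (p + 2)) (Fin (p + 2)) ℤ :=
    Matrix.of fun i j => ichoose (m + 1 - g j) (1 - ((i : ℤ) + 1) + ((j : ℤ) + 1)) with hBf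
  set Ef : Matrix (Fin (p + 2)) (Fin (p + 2)) ℤ :=
    Matrix.of fun i j => ichoose (m - g j) ((j : ℤ) - (i : ℤ)) with hEf
  have pascal : ∀ i j : Fin (p + 2), Bf i j = Af i j + Ef i j := by
    intro i j
    have h1 : m + 1 - g j = (m - g j) + 1 := by ring
    have h2 : (0:ℤ) ≤ m - g j := sub_nonneg.mpr (hg j)
    simp only [hAf, hBf, hEf, Matrix.of_apply]
    rw [h1, ichoose_pascal _ _ h2]
    congr 2
    ring
  -- the interpolating matrices
  set M : ℕ → Matrix (Fin (p + 2)) (Fin (p + 2)) ℤ :=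
    fun t => Matrix.of fun i j => if (i : ℕ) < t then Bf i j else Af i j with hMdef
  have key : ∀ t : ℕ, t ≤ p + 1 → (M t).det = Af.det := by
    intro t ht
    induction t with
    | zero =>
      have h0 : M 0 = Af := by ext i j; simp [hMdef]
      rw [h0]
    | succ t ih =>
      have ht' : t ≤ p + 1 := by omega
      set i0 : Fin (p + 2) := ⟨t, by omega⟩ with hi0
      set i1 : Fin (p + 2) := ⟨t + 1, by omega⟩ with hi1
      have hstep : M (t + 1) = Matrix.updateRow (M t) i0 (fun j => Bf i0 j) := by
        ext i j
        rw [Matrix.updateRow_apply]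
        by_cases h : i = i0
        · subst h
          simp [hMdef, hi0]
        · rw [if_neg h]
          have hiv : (i : ℕ) ≠ t := by
            intro hh
            exact h (Fin.ext (by simpa [hi0] using hh))
          have hc : ((i : ℕ) < t + 1) ↔ ((i : ℕ) < t) := by omega
          simp only [hMdef, Matrix.of_apply, hc]
      have hBrow : (fun j => Bf i0 j) = (fun j => Af i0 j) + (fun j => Ef i0 j) := by
        funext j
        exact pascal i0 j
      rw [hstep, hBrow, Matrix.det_updateRow_add]
      have hArow : (fun j => Af i0 j) = M t i0 := by
        funext j
        simp [hMdef, hi0]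
      rw [hArow, Matrix.updateRow_eq_self]
      have hzero : ((M t).updateRow i0 (fun j => Ef i0 j)).det = 0 := by
        apply Matrix.det_zero_of_row_eq (show i0 ≠ i1 by simp [hi0, hi1, Fin.ext_iff])
        rw [Matrix.updateRow_self, Matrix.updateRow_ne (show i1 ≠ i0 by simp [hi0, hi1, Fin.ext_iff])]
        funext j
        have : ¬ ((i1 : ℕ) < t) := by simp [hi1]
        simp only [hMdef, Matrix.of_apply, if_neg this, hEf, hAf]
        congr 1
        simp [hi0, hi1]
        push_cast
        ring
      rw [hzero, ih ht']
      ring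
  -- final step
  have hBM : Bf = Matrix.updateRow (M (p + 1)) (Fin.last (p + 1)) (fun j => Bf (Fin.last (p + 1)) j) := by
    ext i j
    rw [Matrix.updateRow_apply]
    by_cases h : i = Fin.last (p + 1)
    · subst h; rw [if_pos rfl]
    · rw [if_neg h]
      have : (i : ℕ) < p + 1 := by
        have := i.isLt
        have hne : (i : ℕ) ≠ p + 1 := by
          intro hh; exact h (Fin.ext (by simpa using hh))
        omega
      simp only [hMdef, Matrix.of_apply, if_pos this]
  have hBrow : (fun j => Bf (Fin.last (p + 1)) j)
      = (fun j => Af (Fin.last (p + 1)) j) + (fun j => Ef (Fin.last (p + 1)) j) := by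
    funext j
    exact pascal _ j
  have hArow : (fun j => Af (Fin.last (p + 1)) j) = M (p + 1) (Fin.last (p + 1)) := by
    funext j
    simp [hMdef, Fin.val_last]
  have main : Bf.det = Af.det
      + ((M (p + 1)).updateRow (Fin.last (p + 1)) (fun j => Ef (Fin.last (p + 1)) j)).det := by
    rw [hBM, hBrow, Matrix.det_updateRow_add, hArow, Matrix.updateRow_eq_self, key (p + 1) le_rfl]
  -- compute the last determinant by expansion along the last row
  set G := (M (p + 1)).updateRow (Fin.last (p + 1)) (fun j => Ef (Fin.last (p + 1)) j) with hG
  have hGdet : G.det = D' (m + 1) u k (p + 1) := by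
    rw [Matrix.det_succ_row G (Fin.last (p + 1))]
    rw [Finset.sum_eq_single (Fin.last (p + 1))]
    · have hGll : G (Fin.last (p + 1)) (Fin.last (p + 1)) = 1 := by
        rw [hG, Matrix.updateRow_self]
        simp only [hEf, Matrix.of_apply]
        rw [show ((Fin.last (p + 1) : Fin (p + 2)) : ℤ) - ((Fin.last (p + 1) : Fin (p + 2)) : ℤ) = 0 by ring]
        exact ichoose_zero _
      rw [hGll]
      have hsign : (-1 : ℤ) ^ ((Fin.last (p + 1) : ℕ) + (Fin.last (p + 1) : ℕ)) = 1 := by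
        rw [show ((Fin.last (p + 1) : ℕ) + (Fin.last (p + 1) : ℕ)) = 2 * (p + 1) by
          simp [Fin.val_last]; ring, pow_mul]
        norm_num
      rw [hsign]
      simp only [one_mul, mul_one]
      congr 1
      rw [Fin.succAbove_last]
      ext i j
      have hine : Fin.castSucc i ≠ Fin.last (p + 1) := (Fin.castSucc_lt_last i).ne
      simp only [Matrix.submatrix_apply, hG]
      rw [Matrix.updateRow_ne hine]
      have hlt : ((Fin.castSucc i : Fin (p + 2)) : ℕ) < p + 1 := by
        simpa using i.isLt
      simp only [hMdef, Matrix.of_apply, if_pos hlt, hBf, hgdef]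
      simp [Fin.coe_castSucc]
    · intro j _ hj
      have hGlj : G (Fin.last (p + 1)) j = 0 := by
        rw [hG, Matrix.updateRow_self]
        simp only [hEf, Matrix.of_apply]
        apply ichoose_neg
        have hjv : (j : ℕ) < p + 1 := by
          have := j.isLt
          have : (j : ℕ) ≠ p + 1 := fun hh => hj (Fin.ext (by simpa using hh))
          omega
        have : ((j : ℕ) : ℤ) < p + 1 := by exact_mod_cast hjv
        simp only [Fin.val_last]
        push_cast
        omega
      rw [hGlj]
      ring
    · intro h
      exact absurd (Finset.mem_univ _) h
  have : Bf.det = Af.det + D' (m + 1) u k (p + 1) := by rw [main, hGdet]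
  simpa [D', hAf, hBf, hgdef] using this

theorem det_forward_recurrence (m n u k : ℤ) (hu : 0 ≤ u) (hk : 2 ≤ k) (hn : 3 ≤ n)
    (hm : max (u + 1) ((k - 1) * (n - 1)) ≤ m) :
    D m n u k = D (m + 1) n u k - D (m + 1) (n - 1) u k := by
  obtain ⟨p, hp⟩ : ∃ p : ℕ, (n - 1).toNat = p + 2 := ⟨(n - 3).toNat, by omega⟩
  have hp' : (n - 1 - 1).toNat = p + 1 := by omega
  have h1 := le_trans (le_max_left _ _) hm
  have h2 := le_trans (le_max_right _ _) hm
  have hg : ∀ j : Fin (p + 2), max u ((k - 1) * ((j : ℤ) + 1)) ≤ m := by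
    intro j
    have hj : ((j : ℕ) : ℤ) + 1 ≤ n - 1 := by
      have := j.isLt
      omega
    refine max_le (by omega) ?_
    calc (k - 1) * ((j : ℤ) + 1) ≤ (k - 1) * (n - 1) :=
          mul_le_mul_of_nonneg_left hj (by omega)
      _ ≤ m := h2
  have := det_step p m u k hg
  rw [D_eq_D' m n, D_eq_D' (m + 1) n, D_eq_D' (m + 1) (n - 1), hp, hp']
  omega
end

section
/- For all integers m, n, k with k ≥ 1, n ≥ 1 and m ≥ kn, the determinant D(m+1, n+1, 0, k+1) equals (m+1-kn)/(m+1) · C(m+n, n), where the equality is of rational numbers. -/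
def ent (m k i j : ℕ) : ℤ :=
  if i ≤ j + 1 then ((m + 1 - k * (j + 1)).choose (j + 1 - i) : ℤ) else 0

def Amat (m k N : ℕ) : Matrix (Fin N) (Fin N) ℤ :=
  Matrix.of fun i j => ent m k i j

lemma succAbove_val {N : ℕ} (p : Fin (N + 1)) (s : Fin N) :
    ((p.succAbove s) : ℕ) = if (s : ℕ) < (p : ℕ) then (s : ℕ) else (s : ℕ) + 1 := by
  rw [Fin.succAbove]
  split
  · rename_i h
    simp [Fin.lt_def] at h
    simp [h]
  · rename_i h
    simp [Fin.lt_def] at h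
    simp [Nat.not_lt.mpr h]

lemma sumS : ∀ (a N n : ℕ), a + n ≤ N →
    ∑ r ∈ Finset.range (n + 1), (-1 : ℤ) ^ r * (a.choose r) * ((N - r).choose (n - r)) =
      ((N - a).choose n : ℤ) := by
  intro a
  induction a with
  | zero =>
    intro N n h
    rw [Finset.sum_eq_single 0]
    · simp
    · intro r _ hr
      rcases Nat.exists_eq_succ_of_ne_zero hr with ⟨r', rfl⟩
      simp [Nat.choose_eq_zero_of_lt (Nat.succ_pos r')]
    · simp
  | succ a ih =>
    intro N n h
    cases n with
    | zero => simp
    | succ n' =>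
      rw [Finset.sum_range_succ']
      have e1 : ∀ r ∈ Finset.range (n' + 1),
          (-1 : ℤ) ^ (r + 1) * ((a+1).choose (r+1)) * ((N - (r+1)).choose (n' + 1 - (r+1)))
          = ((-1 : ℤ) ^ (r + 1) * (a.choose (r+1)) * ((N - (r+1)).choose (n' + 1 - (r+1))))
            - (-1 : ℤ) ^ r * (a.choose r) * (((N-1) - r).choose (n' - r)) := by
        intro r hr
        have h2 : N - (r+1) = (N - 1) - r := by omega
        have h3 : n' + 1 - (r + 1) = n' - r := by omega
        rw [Nat.choose_succ_succ, h2, h3]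
        push_cast
        ring
      rw [Finset.sum_congr rfl e1, Finset.sum_sub_distrib]
      have hS1 : (∑ r ∈ Finset.range (n' + 1),
          (-1 : ℤ) ^ (r + 1) * (a.choose (r+1)) * ((N - (r+1)).choose (n' + 1 - (r+1))))
          + (-1 : ℤ) ^ 0 * ((a+1).choose 0) * ((N - 0).choose (n' + 1 - 0))
          = ((N - a).choose (n'+1) : ℤ) := by
        have := ih N (n' + 1) (by omega)
        rw [Finset.sum_range_succ'] at this
        simpa using this
      have hS2 : ∑ r ∈ Finset.range (n' + 1),
          (-1 : ℤ) ^ r * (a.choose r) * (((N-1) - r).choose (n' - r))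
          = (((N-1) - a).choose n' : ℤ) := ih (N-1) n' (by omega)
      rw [hS2]
      have : ((N - a).choose (n'+1) : ℤ)
          = (∑ r ∈ Finset.range (n' + 1),
          (-1 : ℤ) ^ (r + 1) * (a.choose (r+1)) * ((N - (r+1)).choose (n' + 1 - (r+1))))
          + (-1 : ℤ) ^ 0 * ((a+1).choose 0) * ((N - 0).choose (n' + 1 - 0)) := hS1.symm
      have hPas : (N - a).choose (n'+1) = (N - (a+1)).choose n' + (N - (a+1)).choose (n'+1) := by
        have hx : N - a = (N - (a+1)) + 1 := by omega
        rw [hx, Nat.choose_succ_succ]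
      have hN1 : (N-1) - a = N - (a+1) := by omega
      rw [hN1]
      push_cast at hPas
      linarith

lemma key (m n k : ℕ) (hk : 1 ≤ k) (hn : 1 ≤ n) (h : k * n ≤ m) :
    ∑ r ∈ Finset.range (n + 1), (-1 : ℤ) ^ r * ((m + 1 - k * n).choose r)
      * (((m + 1 - k * n : ℕ) : ℤ) + (k : ℤ) * r) * (((m + n - r).choose (n - r) : ℤ)) = 0 := by
  set a := m + 1 - k * n with ha
  set N := m + n with hN
  have haN : a + n ≤ N := by
    have : n ≤ k * n := Nat.le_mul_of_pos_left n hk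
    omega
  have split : ∀ r ∈ Finset.range (n + 1),
      (-1 : ℤ) ^ r * (a.choose r) * ((a : ℤ) + (k : ℤ) * r) * (((N - r).choose (n - r) : ℤ))
      = (a : ℤ) * ((-1 : ℤ) ^ r * (a.choose r) * ((N - r).choose (n - r)))
        + (k : ℤ) * ((-1 : ℤ) ^ r * ((r : ℤ) * (a.choose r)) * ((N - r).choose (n - r))) := by
    intro r _
    ring
  rw [Finset.sum_congr rfl split, Finset.sum_add_distrib, ← Finset.mul_sum, ← Finset.mul_sum,
    sumS a N n haN]
  -- second sum
  obtain ⟨b, hb⟩ : ∃ b, a = b + 1 := ⟨m - k * n, by omega⟩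
  have hS2 : ∑ r ∈ Finset.range (n + 1),
      (-1 : ℤ) ^ r * ((r : ℤ) * (a.choose r)) * ((N - r).choose (n - r))
      = -(a : ℤ) * (((N - a).choose (n - 1) : ℤ)) := by
    rw [Finset.sum_range_succ']
    have e1 : ∀ r ∈ Finset.range n,
        (-1 : ℤ) ^ (r + 1) * (((r + 1 : ℕ) : ℤ) * (a.choose (r + 1))) * ((N - (r+1)).choose (n - (r+1)))
        = -(a : ℤ) * ((-1 : ℤ) ^ r * (b.choose r) * (((N - 1) - r).choose ((n - 1) - r))) := by
      intro r hr
      have hmul : (r + 1) * a.choose (r + 1) = a * b.choose r := by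
        rw [hb]
        rw [mul_comm]
        rw [← Nat.add_one_mul_choose_eq]
      have h2 : N - (r + 1) = (N - 1) - r := by omega
      have h3 : n - (r + 1) = (n - 1) - r := by omega
      have : ((r + 1 : ℕ) : ℤ) * (a.choose (r + 1)) = (a : ℤ) * (b.choose r) := by
        exact_mod_cast congrArg (Nat.cast : ℕ → ℤ) hmul
      rw [h2, h3, this]
      ring
    rw [Finset.sum_congr rfl e1]
    have hrange : ∑ r ∈ Finset.range n,
        -(a : ℤ) * ((-1 : ℤ) ^ r * (b.choose r) * (((N - 1) - r).choose ((n - 1) - r)))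
        = -(a : ℤ) * (((N - 1 - b).choose (n - 1) : ℤ)) := by
      rw [← Finset.mul_sum]
      congr 1
      have hn' : n = (n - 1) + 1 := by omega
      rw [hn']
      exact sumS b (N - 1) (n - 1) (by omega)
    rw [hrange]
    have : N - 1 - b = N - a := by omega
    rw [this]
    simp
  rw [hS2]
  -- now pure computation  C(N-a, n) = k * C(N-a, n-1)
  have hM : N - a = k * n + n - 1 := by omega
  have hrat : ((N - a).choose n : ℤ) = (k : ℤ) * ((N - a).choose (n - 1)) := by
    have h1 : (N - a).choose ((n-1) + 1) * ((n-1) + 1) = (N - a).choose (n-1) * ((N - a) - (n-1)) :=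
      Nat.choose_succ_right_eq _ _
    have h2 : (N - a) - (n - 1) = k * n := by omega
    have h3 : (n - 1) + 1 = n := by omega
    rw [h2, h3] at h1
    have : (N - a).choose n * n = k * (N - a).choose (n - 1) * n := by
      rw [h1]; ring
    have := Nat.eq_of_mul_eq_mul_right (by omega : 0 < n) this
    exact_mod_cast congrArg (Nat.cast : ℕ → ℤ) this
  rw [hrat]
  ring

lemma ent_last_zero (m k N : ℕ) (t : ℕ) (ht : t + 1 < N + 1) : ent m k (N + 1) t = 0 := by
  rw [ent, if_neg (by omega)]

lemma ent_last_one (m k N : ℕ) : ent m k (N + 1) N = 1 := by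
  rw [ent, if_pos (by omega)]
  simp

lemma minor (m k : ℕ) : ∀ (N : ℕ) (i : Fin (N + 1)),
    ((Amat m k (N + 1)).submatrix i.succAbove Fin.castSucc).det = (Amat m k i.val).det := by
  intro N
  induction N with
  | zero =>
    intro i
    have : (i : ℕ) = 0 := by omega
    rw [this]
    rfl
  | succ N IH =>
    intro i
    by_cases hiN : (i : ℕ) = N + 1
    · have hM : ((Amat m k (N + 2)).submatrix i.succAbove Fin.castSucc) = Amat m k (N + 1) := by
        ext s t
        simp only [Amat, Matrix.submatrix_apply, Matrix.of_apply, succAbove_val,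
          Fin.coe_castSucc]
        rw [if_pos (by omega)]
      rw [hM, hiN]
    · have hi' : (i : ℕ) ≤ N := by omega
      have hexp := Matrix.det_succ_row (n := N)
        ((Amat m k (N + 1 + 1)).submatrix i.succAbove Fin.castSucc) (Fin.last N)
      rw [hexp, Finset.sum_eq_single (Fin.last N)]
      · have hrow : ((Amat m k (N + 2)).submatrix i.succAbove Fin.castSucc)
            (Fin.last N) (Fin.last N) = 1 := by
          simp only [Amat, Matrix.submatrix_apply, Matrix.of_apply, succAbove_val,
            Fin.coe_castSucc, Fin.val_last]
          rw [if_neg (by omega)]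
          exact ent_last_one m k N
        rw [hrow, Fin.succAbove_last, Matrix.submatrix_submatrix]
        have hsub : ((Amat m k (N + 2)).submatrix (i.succAbove ∘ Fin.castSucc)
            (Fin.castSucc ∘ Fin.castSucc))
            = (Amat m k (N + 1)).submatrix (Fin.succAbove ⟨(i : ℕ), by omega⟩) Fin.castSucc := by
          ext s t
          simp only [Amat, Matrix.submatrix_apply, Matrix.of_apply, Function.comp_apply,
            succAbove_val, Fin.coe_castSucc]
        rw [hsub, IH ⟨(i : ℕ), by omega⟩]
        simp only [Fin.val_last]
        have : (-1 : ℤ) ^ (N + N) = 1 := by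
          rw [← two_mul, pow_mul]
          simp
        rw [this, one_mul, one_mul]
      · intro j _ hj
        have hrow0 : ((Amat m k (N + 2)).submatrix i.succAbove Fin.castSucc)
            (Fin.last N) j = 0 := by
          simp only [Amat, Matrix.submatrix_apply, Matrix.of_apply, succAbove_val,
            Fin.coe_castSucc, Fin.val_last]
          rw [if_neg (by omega)]
          have hjv : (j : ℕ) + 1 < N + 1 := by
            have : (j : ℕ) ≠ N := fun hc => hj (Fin.ext hc)
            omega
          exact ent_last_zero m k N j hjv
        rw [hrow0]
        ring
      · intro hc
        exact absurd (Finset.mem_univ _) hc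

lemma recur (m k N : ℕ) :
    (Amat m k (N + 1)).det = ∑ i ∈ Finset.range (N + 1),
      (-1 : ℤ) ^ (i + N) * ent m k i N * (Amat m k i).det := by
  have hexp := Matrix.det_succ_column (n := N) (Amat m k (N + 1)) (Fin.last N)
  rw [hexp]
  rw [← Fin.sum_univ_eq_sum_range
    (fun i => (-1 : ℤ) ^ (i + N) * ent m k i N * (Amat m k i).det) (N + 1)]
  apply Finset.sum_congr rfl
  intro i _
  rw [Fin.succAbove_last, minor m k N i]
  simp [Amat, Fin.val_last]

lemma main (m k : ℕ) (hk : 1 ≤ k) : ∀ N, k * N ≤ m →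
    (m + 1 : ℤ) * (Amat m k N).det
      = ((m + 1 - k * N : ℕ) : ℤ) * (((m + N).choose N : ℕ) : ℤ) := by
  intro N
  induction N using Nat.strong_induction_on with
  | _ N IH =>
    match N with
    | 0 =>
      intro _
      have h0 : (Amat m k 0).det = 1 := Matrix.det_isEmpty
      rw [h0]
      simp
    | N + 1 =>
      intro hkN
      have hexp : k * (N + 1) = k * N + k := by ring
      have hkN' : k * N ≤ m := by omega
      rw [recur m k N, Finset.mul_sum]
      have step : ∀ i ∈ Finset.range (N + 1),
          (m + 1 : ℤ) * ((-1 : ℤ) ^ (i + N) * ent m k i N * (Amat m k i).det)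
          = (-1 : ℤ) ^ (i + N) * (((m + 1 - k * (N + 1)).choose (N + 1 - i) : ℕ) : ℤ)
            * ((m + 1 - k * i : ℕ) : ℤ) * (((m + i).choose i : ℕ) : ℤ) := by
        intro i hi
        have hi' : i ≤ N := by
          have := Finset.mem_range.mp hi; omega
        have hki : k * i ≤ m := le_trans (Nat.mul_le_mul_left k hi') hkN'
        have hIH := IH i (by omega) hki
        have hent : ent m k i N = (((m + 1 - k * (N + 1)).choose (N + 1 - i) : ℕ) : ℤ) := by
          rw [ent, if_pos (by omega)]
        rw [hent]
        calc (m + 1 : ℤ) * ((-1 : ℤ) ^ (i + N)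
              * (((m + 1 - k * (N + 1)).choose (N + 1 - i) : ℕ) : ℤ) * (Amat m k i).det)
            = (-1 : ℤ) ^ (i + N) * (((m + 1 - k * (N + 1)).choose (N + 1 - i) : ℕ) : ℤ)
              * ((m + 1 : ℤ) * (Amat m k i).det) := by ring
          _ = _ := by rw [hIH]; ring
      rw [Finset.sum_congr rfl step]
      -- reflect the sum
      rw [← Finset.sum_range_reflect]
      have hkey := key m (N + 1) k hk (by omega) hkN
      rw [Finset.sum_range_succ'] at hkey
      have step2 : ∀ j ∈ Finset.range (N + 1),
          (-1 : ℤ) ^ ((N + 1 - 1 - j) + N)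
            * (((m + 1 - k * (N + 1)).choose (N + 1 - (N + 1 - 1 - j)) : ℕ) : ℤ)
            * ((m + 1 - k * (N + 1 - 1 - j) : ℕ) : ℤ)
            * (((m + (N + 1 - 1 - j)).choose (N + 1 - 1 - j) : ℕ) : ℤ)
          = -((-1 : ℤ) ^ (j + 1) * ((m + 1 - k * (N + 1)).choose (j + 1))
              * (((m + 1 - k * (N + 1) : ℕ) : ℤ) + (k : ℤ) * ((j + 1 : ℕ) : ℤ))
              * (((m + (N + 1) - (j + 1)).choose (N + 1 - (j + 1)) : ℕ) : ℤ)) := by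
        intro j hj
        have hj' : j ≤ N := by
          have := Finset.mem_range.mp hj; omega
        have e0 : N + 1 - 1 - j = N - j := by omega
        have e1 : N + 1 - (N - j) = j + 1 := by omega
        have e2 : m + (N - j) = m + (N + 1) - (j + 1) := by omega
        have e3 : N - j = N + 1 - (j + 1) := by omega
        rw [e0, e1]
        rw [show (((m + (N - j)).choose (N - j) : ℕ) : ℤ)
            = (((m + (N + 1) - (j + 1)).choose (N + 1 - (j + 1)) : ℕ) : ℤ) by rw [← e2, ← e3]]
        have hsign : (-1 : ℤ) ^ (N - j + N) = (-1 : ℤ) ^ j := by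
          have : N - j + N = j + 2 * (N - j) := by omega
          rw [this, pow_add, pow_mul, neg_one_sq, one_pow, mul_one]
        rw [hsign]
        have hfac : ((m + 1 - k * (N - j) : ℕ) : ℤ)
            = ((m + 1 - k * (N + 1) : ℕ) : ℤ) + (k : ℤ) * ((j : ℤ) + 1) := by
          have hd : ((k * (j + 1) : ℕ) : ℤ) = (k : ℤ) * ((j : ℤ) + 1) := by push_cast; ring
          rw [← hd]
          have hsplit : k * (N + 1) = k * (N - j) + k * (j + 1) := by
            rw [← Nat.mul_add]
            congr 1
            omega
          have h1 : k * (N - j) ≤ m := le_trans (Nat.mul_le_mul_left k (by omega)) hkN'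
          omega
        rw [hfac]
        push_cast
        ring
      rw [Finset.sum_congr rfl step2, Finset.sum_neg_distrib]
      have hK0 : (-1 : ℤ) ^ 0 * (((m + 1 - k * (N + 1)).choose 0 : ℕ) : ℤ)
          * (((m + 1 - k * (N + 1) : ℕ) : ℤ) + (k : ℤ) * (0 : ℕ))
          * (((m + (N + 1) - 0).choose (N + 1 - 0) : ℕ) : ℤ)
          = ((m + 1 - k * (N + 1) : ℕ) : ℤ) * (((m + (N + 1)).choose (N + 1) : ℕ) : ℤ) := by
        simp
      rw [hK0] at hkey
      linarith [hkey]


theorem det_eq_generalized_ballot (m n k : ℤ) (hk : 1 ≤ k) (hn : 1 ≤ n) (hm : k * n ≤ m) :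
    (D (m + 1) (n + 1) 0 (k + 1) : ℚ) =
      ((m : ℚ) + 1 - (k : ℚ) * (n : ℚ)) / ((m : ℚ) + 1) * (ichoose (m + n) n : ℚ) := by
  have hkn1 : (1 : ℤ) ≤ k * n := le_trans (by norm_num) (mul_le_mul hk hn (by norm_num) (by omega))
  have hm1 : (1 : ℤ) ≤ m := le_trans hkn1 hm
  set m' := m.toNat with hm'def
  set n' := n.toNat with hn'def
  set k' := k.toNat with hk'def
  have hkk : (k' : ℤ) = k := Int.toNat_of_nonneg (by omega)
  have hmm2 : (m' : ℤ) = m := Int.toNat_of_nonneg (by omega)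
  have hnn : (n' : ℤ) = n := Int.toNat_of_nonneg (by omega)
  have hck : ((k' * n' : ℕ) : ℤ) = k * n := by push_cast [hkk, hnn]; ring
  have hm'' : k' * n' ≤ m' := by omega
  have hk'' : 1 ≤ k' := by omega
  have hn'' : 1 ≤ n' := by omega
  -- identify D with the determinant of Amat
  have hft : ((n + 1 : ℤ) - 1).toNat = n' := by omega
  have hD : D (m + 1) (n + 1) 0 (k + 1) = (Amat m' k' n').det := by
    rw [D]
    rw [← Matrix.det_submatrix_equiv_self (finCongr hft.symm)]
    congr 1
    ext i j
    simp only [Amat, Matrix.submatrix_apply, Matrix.of_apply, finCongr_apply, Fin.coe_cast]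
    have hjn : (j : ℕ) < n' := j.isLt
    have hmax : max (0 : ℤ) ((k + 1 - 1) * (((j : ℕ) : ℤ) + 1)) = k * (((j : ℕ) : ℤ) + 1) := by
      rw [show (k + 1 - 1 : ℤ) = k by ring]
      exact max_eq_right (mul_nonneg (by omega) (by positivity))
    rw [hmax]
    have hc : ((k' * ((j : ℕ) + 1) : ℕ) : ℤ) = k * (((j : ℕ) : ℤ) + 1) := by
      push_cast [hkk]; ring
    have hb : k' * ((j : ℕ) + 1) ≤ m' :=
      le_trans (Nat.mul_le_mul_left k' (by omega)) hm''
    by_cases hij : (i : ℕ) ≤ (j : ℕ) + 1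
    · rw [ichoose, if_pos (by omega), ent, if_pos hij]
      have e1 : (m + 1 - k * (((j : ℕ) : ℤ) + 1)).toNat = m' + 1 - k' * ((j : ℕ) + 1) := by
        omega
      have e2 : (1 - (((i : ℕ) : ℤ) + 1) + (((j : ℕ) : ℤ) + 1)).toNat = (j : ℕ) + 1 - (i : ℕ) := by
        omega
      rw [e1, e2]
    · rw [ichoose, if_neg (by omega), ent, if_neg hij]
  have hich : ichoose (m + n) n = (((m' + n').choose n' : ℕ) : ℤ) := by
    rw [ichoose, if_pos (by omega)]
    have e1 : (m + n).toNat = m' + n' := by omega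
    have e2 : n.toNat = n' := rfl
    rw [e1, e2]
  have hmain := main m' k' hk'' n' hm''
  have hfacZ : ((m' + 1 - k' * n' : ℕ) : ℤ) = m + 1 - k * n := by omega
  rw [hfacZ] at hmain
  -- move to ℚ
  have hQ := congrArg (Int.cast : ℤ → ℚ) hmain
  push_cast at hQ
  rw [hD, hich]
  have hm1Q : ((m : ℚ) + 1) ≠ 0 := by
    have : (1 : ℚ) ≤ (m : ℚ) := by exact_mod_cast hm1
    linarith
  rw [div_mul_eq_mul_div, eq_div_iff hm1Q]
  have hmQ : ((m' : ℕ) : ℚ) = (m : ℚ) := by exact_mod_cast congrArg (Int.cast : ℤ → ℚ) hmm2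
  rw [hmQ] at hQ
  push_cast
  linarith [hQ]
end
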